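/- arXiv:quant-ph/0411043 — 2 statements merged into one kernel-verified Lean document; each statement's English description precedes it below -/
import Mathlib

section
/- For a positive linear map T : Mₙ(ℂ) → Mₘ(ℂ), the Choi matrix H = Σ_{k,l} e_{kl} ⊗ T(e_{kl}) is self-adjoint and block-positive: ⟨x ⊗ y, H (x ⊗ y)⟩ ≥ 0 for all x ∈ ℂⁿ, y ∈ ℂᵐ. Moreover H is the unique such matrix with T_H = T. -/
open Matrix
open scoped ComplexOrder

/-- The elementary tensor `x ⊗ y ∈ ℂⁿ ⊗ ℂᵐ`. -/
def tensorVec {n m : ℕ} (x : Fin n → ℂ) (y : Fin m → ℂ) : Fin n × Fin m → ℂ :=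
  fun p => x p.1 * y p.2

/-- The Choi matrix `H = Σ_{k,l} e_{kl} ⊗ T(e_{kl})` of a linear map `T`. -/
noncomputable def choiMatrix {n m : ℕ}
    (T : Matrix (Fin n) (Fin n) ℂ →ₗ[ℂ] Matrix (Fin m) (Fin m) ℂ) :
    Matrix (Fin n × Fin m) (Fin n × Fin m) ℂ :=
  Matrix.of fun p q => T (Matrix.single p.1 q.1 1) p.2 q.2

/-- A rank-one matrix `v v*` is positive semidefinite. -/
lemma psd_outer_aux {n : ℕ} (v : Fin n → ℂ) : (Matrix.vecMulVec v (star v)).PosSemidef := by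
  have h : Matrix.vecMulVec v (star v) = replicateCol (Fin 1) v * (replicateCol (Fin 1) v)ᴴ := by
    rw [conjTranspose_replicateCol]
    exact vecMulVec_eq (ι := Fin 1) _ _
  rw [h]
  exact Matrix.posSemidef_self_mul_conjTranspose _

/-- A positive map is hermitian-preserving on matrix units. -/
lemma herm_aux {n m : ℕ}
    (T : Matrix (Fin n) (Fin n) ℂ →ₗ[ℂ] Matrix (Fin m) (Fin m) ℂ)
    (hT : ∀ a : Matrix (Fin n) (Fin n) ℂ, a.PosSemidef → (T a).PosSemidef)
    (k l : Fin n) (a b : Fin m) :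
    (starRingEnd ℂ) (T (Matrix.single k l 1) b a) = T (Matrix.single l k 1) a b := by
  set E : Fin n → Fin n → Matrix (Fin n) (Fin n) ℂ := fun i j => Matrix.single i j 1 with hE
  set v1 : Fin n → ℂ := fun i => (if k = i then 1 else 0) + (if l = i then 1 else 0) with hv1
  set v2 : Fin n → ℂ := fun i => (if k = i then 1 else 0) + Complex.I * (if l = i then 1 else 0) with hv2
  have hM1 : Matrix.vecMulVec v1 (star v1) = E k l + E l k + E k k + E l l := by
    ext i j
    simp only [vecMulVec_apply, Pi.star_apply, hv1, hE, Matrix.add_apply, star_add,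
      apply_ite (star : ℂ → ℂ), star_one, star_zero, Matrix.single, Matrix.of_apply]
    by_cases h1 : k = i <;> by_cases h2 : l = i <;> by_cases h3 : k = j <;>
      by_cases h4 : l = j <;> simp_all <;>
      (try ring) <;> (ring_nf; simp [Complex.I_sq]; try ring_nf)
  have hM2 : Matrix.vecMulVec v2 (star v2) =
      E k k + E l l + (-Complex.I) • E k l + Complex.I • E l k := by
    ext i j
    simp only [vecMulVec_apply, Pi.star_apply, hv2, hE, Matrix.add_apply, Matrix.smul_apply,
      star_add, StarMul.star_mul, apply_ite (star : ℂ → ℂ), star_one, star_zero,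
      Complex.star_def, Complex.conj_I, Matrix.single, Matrix.of_apply, smul_eq_mul]
    by_cases h1 : k = i <;> by_cases h2 : l = i <;> by_cases h3 : k = j <;>
      by_cases h4 : l = j <;> simp_all <;>
      (try ring) <;> ((try ring_nf); simp [Complex.I_sq]; try ring_nf)
  have hEkk : ∀ i : Fin n, (E i i).PosSemidef := by
    intro i
    have hs : star (Pi.single i 1 : Fin n → ℂ) = Pi.single i 1 := by
      funext j
      simp [Pi.star_apply, Pi.single_apply, apply_ite (star : ℂ → ℂ)]
    have h : E i i = Matrix.vecMulVec (Pi.single i 1 : Fin n → ℂ)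
        (star (Pi.single i 1 : Fin n → ℂ)) := by
      rw [hs]
      show Matrix.single i i (1:ℂ) = _
      rw [Matrix.single_eq_single_vecMulVec_single]
    rw [h]; exact psd_outer_aux _
  have h1 : (T (E k l) + T (E l k)).IsHermitian := by
    have h : T (E k l) + T (E l k) =
        T (Matrix.vecMulVec v1 (star v1)) - T (E k k) - T (E l l) := by
      rw [hM1]; simp only [map_add]; module
    rw [h]
    exact (((hT _ (psd_outer_aux v1)).1.sub (hT _ (hEkk k)).1).sub (hT _ (hEkk l)).1)
  have h2 : ((-Complex.I) • T (E k l) + Complex.I • T (E l k)).IsHermitian := by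
    have h : (-Complex.I) • T (E k l) + Complex.I • T (E l k) =
        T (Matrix.vecMulVec v2 (star v2)) - T (E k k) - T (E l l) := by
      rw [hM2]; simp only [map_add, LinearMap.map_smul]; module
    rw [h]
    exact (((hT _ (psd_outer_aux v2)).1.sub (hT _ (hEkk k)).1).sub (hT _ (hEkk l)).1)
  have e1 := congrFun (congrFun h1 a) b
  have e2 := congrFun (congrFun h2 a) b
  simp only [Matrix.conjTranspose_apply, Matrix.add_apply, Matrix.smul_apply, star_add,
    star_smul, Complex.star_def, smul_eq_mul, map_neg, neg_mul, neg_neg, _root_.map_mul,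
    Complex.conj_I] at e1 e2
  have e2' : (starRingEnd ℂ) (T (E k l) b a) - (starRingEnd ℂ) (T (E l k) b a) =
      T (E l k) a b - T (E k l) a b := by
    apply mul_left_cancel₀ Complex.I_ne_zero
    linear_combination e2
  linear_combination e1/2 + e2'/2

/-- The Choi matrix of a positive map is self-adjoint and block-positive, and it is
the unique matrix `H` with `T_H = T`. -/
theorem choiMatrix_selfAdjoint_blockPositive_unique {n m : ℕ}
    (T : Matrix (Fin n) (Fin n) ℂ →ₗ[ℂ] Matrix (Fin m) (Fin m) ℂ)
    (hT : ∀ a : Matrix (Fin n) (Fin n) ℂ, a.PosSemidef → (T a).PosSemidef) :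
    (choiMatrix T)ᴴ = choiMatrix T ∧
    (∀ (x : Fin n → ℂ) (y : Fin m → ℂ),
      0 ≤ (star (tensorVec x y) ⬝ᵥ (choiMatrix T).mulVec (tensorVec x y)).re) ∧
    (∀ H : Matrix (Fin n × Fin m) (Fin n × Fin m) ℂ,
      (∀ a : Matrix (Fin n) (Fin n) ℂ,
        T a = Matrix.of fun k l => ∑ i, ∑ j, a i j * H (i, k) (j, l)) →
      H = choiMatrix T) := by
  refine ⟨?_, ?_, ?_⟩
  · -- self-adjoint
    ext ⟨k, a⟩ ⟨l, b⟩
    rw [Matrix.conjTranspose_apply]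
    show star (choiMatrix T (l, b) (k, a)) = choiMatrix T (k, a) (l, b)
    simp only [choiMatrix, Matrix.of_apply, Complex.star_def]
    exact herm_aux T hT l k a b
  · -- block positivity
    intro x y
    have hM : (Matrix.vecMulVec (star x) x).PosSemidef := by
      simpa using psd_outer_aux (star x)
    have hpos : 0 ≤ star y ⬝ᵥ (T (Matrix.vecMulVec (star x) x)).mulVec y := (hT _ hM).dotProduct_mulVec_nonneg y
    have key : star (tensorVec x y) ⬝ᵥ (choiMatrix T).mulVec (tensorVec x y) =
        star y ⬝ᵥ (T (Matrix.vecMulVec (star x) x)).mulVec y := by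
      have step1 : star (tensorVec x y) ⬝ᵥ (choiMatrix T).mulVec (tensorVec x y) =
          ∑ k, ∑ l, ((starRingEnd ℂ) (x k) * x l) *
            (star y ⬝ᵥ (T (Matrix.single k l 1)).mulVec y) := by
        simp only [dotProduct, mulVec, choiMatrix, Matrix.of_apply, tensorVec, Pi.star_apply,
          star_mul', Fintype.sum_prod_type, Finset.mul_sum, Finset.sum_mul, Complex.star_def]
        rw [Finset.sum_congr rfl fun k _ => Finset.sum_comm]
        refine Finset.sum_congr rfl fun k _ => Finset.sum_congr rfl fun l _ => ?_
        refine Finset.sum_congr rfl fun a _ => Finset.sum_congr rfl fun b _ => by ring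
      have step2 : star y ⬝ᵥ (T (Matrix.vecMulVec (star x) x)).mulVec y =
          ∑ k, ∑ l, ((starRingEnd ℂ) (x k) * x l) *
            (star y ⬝ᵥ (T (Matrix.single k l 1)).mulVec y) := by
        have hMe : Matrix.vecMulVec (star x) x =
            ∑ k, ∑ l, ((starRingEnd ℂ) (x k) * x l) • Matrix.single k l (1:ℂ) := by
          ext i j
          simp [vecMulVec_apply, Matrix.sum_apply, Matrix.single, Matrix.of_apply,
            mul_ite, ite_and, Finset.sum_ite_eq, Complex.star_def]
        rw [hMe]
        simp only [map_sum, LinearMap.map_smul]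
        simp only [dotProduct, mulVec, Matrix.sum_apply, Matrix.smul_apply, smul_eq_mul,
          Finset.mul_sum, Finset.sum_mul]
        have comm4 : ∀ (f : Fin m → Fin m → Fin n → Fin n → ℂ),
            (∑ a, ∑ b, ∑ k, ∑ l, f a b k l) = ∑ k, ∑ l, ∑ a, ∑ b, f a b k l := by
          intro f
          calc (∑ a, ∑ b, ∑ k, ∑ l, f a b k l)
              = ∑ a, ∑ k, ∑ b, ∑ l, f a b k l :=
                Finset.sum_congr rfl fun a _ => Finset.sum_comm
            _ = ∑ k, ∑ a, ∑ b, ∑ l, f a b k l := Finset.sum_comm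
            _ = ∑ k, ∑ a, ∑ l, ∑ b, f a b k l :=
                Finset.sum_congr rfl fun k _ => Finset.sum_congr rfl fun a _ => Finset.sum_comm
            _ = ∑ k, ∑ l, ∑ a, ∑ b, f a b k l :=
                Finset.sum_congr rfl fun k _ => Finset.sum_comm
        rw [comm4 (fun a b k l => star y a *
          ((starRingEnd ℂ) (x k) * x l * T (Matrix.single k l 1) a b * y b))]
        refine Finset.sum_congr rfl fun k _ => Finset.sum_congr rfl fun l _ =>
          Finset.sum_congr rfl fun a _ => Finset.sum_congr rfl fun b _ => by ring
      rw [step1, ← step2]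
    rw [key]
    exact (Complex.le_def.mp hpos).1
  · -- uniqueness
    intro H hH
    ext ⟨k, a⟩ ⟨l, b⟩
    show H (k, a) (l, b) = choiMatrix T (k, a) (l, b)
    simp only [choiMatrix, Matrix.of_apply]
    rw [hH (Matrix.single k l 1)]
    simp [Matrix.single, ite_and, boole_mul, Finset.sum_ite_eq]
end

section
/- A linear map T : Mₙ(ℂ) → Mₘ(ℂ) is completely positive if and only if its Choi matrix H = Σ_{k,l} e_{kl} ⊗ T(e_{kl}) ∈ M_{nm}(ℂ) is positive semidefinite. -/
open Matrix
open scoped ComplexOrder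

/-- `T` is completely positive: `id_k ⊗ T` is a positive map for every `k`. -/
def IsCompletelyPositive {n m : ℕ}
    (T : Matrix (Fin n) (Fin n) ℂ →ₗ[ℂ] Matrix (Fin m) (Fin m) ℂ) : Prop :=
  ∀ (k : ℕ) (A : Matrix (Fin k × Fin n) (Fin k × Fin n) ℂ), A.PosSemidef →
    Matrix.PosSemidef
      (Matrix.of fun p q : Fin k × Fin m =>
        T (Matrix.of fun i j => A (p.1, i) (q.1, j)) p.2 q.2)

/-- Expansion of `T X` in terms of the Choi matrix. -/
lemma T_expand {n m : ℕ}
    (T : Matrix (Fin n) (Fin n) ℂ →ₗ[ℂ] Matrix (Fin m) (Fin m) ℂ)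
    (X : Matrix (Fin n) (Fin n) ℂ) (r s : Fin m) :
    T X r s = ∑ i, ∑ j, X i j * choiMatrix T (i, r) (j, s) := by
  conv_lhs => rw [matrix_eq_sum_single X]
  rw [map_sum]
  simp only [Matrix.sum_apply]
  refine Finset.sum_congr rfl fun i _ => ?_
  rw [map_sum]
  simp only [Matrix.sum_apply]
  refine Finset.sum_congr rfl fun j _ => ?_
  have h1 : Matrix.single i j (X i j) = (X i j) • Matrix.single i j 1 := by
    rw [Matrix.smul_single, smul_eq_mul, mul_one]
  rw [h1, _root_.map_smul, Matrix.smul_apply, smul_eq_mul]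
  rfl

/-- Reordering a quadruple sum. -/
lemma sum_swap4 {α β γ δ M : Type*} [Fintype α] [Fintype β] [Fintype γ] [Fintype δ]
    [AddCommMonoid M] (f : α → β → γ → δ → M) :
    ∑ a, ∑ b, ∑ c, ∑ d, f a b c d = ∑ c, ∑ d, ∑ a, ∑ b, f a b c d := by
  trans ∑ a, ∑ c, ∑ b, ∑ d, f a b c d
  · exact Finset.sum_congr rfl fun a _ => Finset.sum_comm
  trans ∑ c, ∑ a, ∑ b, ∑ d, f a b c d
  · exact Finset.sum_comm
  refine Finset.sum_congr rfl fun c _ => ?_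
  trans ∑ a, ∑ d, ∑ b, f a b c d
  · exact Finset.sum_congr rfl fun a _ => Finset.sum_comm
  · exact Finset.sum_comm

/-- Choi's theorem: `T` is completely positive iff its Choi matrix is positive
semidefinite. -/
theorem choi_theorem {n m : ℕ}
    (T : Matrix (Fin n) (Fin n) ℂ →ₗ[ℂ] Matrix (Fin m) (Fin m) ℂ) :
    IsCompletelyPositive T ↔ (choiMatrix T).PosSemidef := by
  constructor
  · intro hT
    have hA : Matrix.PosSemidef (Matrix.of fun p q : Fin n × Fin n =>
        (if p.1 = p.2 then (1:ℂ) else 0) * (if q.1 = q.2 then (1:ℂ) else 0)) := by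
      have h := Matrix.posSemidef_conjTranspose_mul_self
        (Matrix.of (fun (_ : Unit) (p : Fin n × Fin n) => if p.1 = p.2 then (1:ℂ) else 0))
      have he : (Matrix.of fun p q : Fin n × Fin n =>
          (if p.1 = p.2 then (1:ℂ) else 0) * (if q.1 = q.2 then (1:ℂ) else 0)) =
          (Matrix.of (fun (_ : Unit) (p : Fin n × Fin n) =>
            if p.1 = p.2 then (1:ℂ) else 0))ᴴ *
          (Matrix.of (fun (_ : Unit) (p : Fin n × Fin n) =>
            if p.1 = p.2 then (1:ℂ) else 0)) := by
        ext p q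
        simp [Matrix.mul_apply, Matrix.conjTranspose_apply, apply_ite (star : ℂ → ℂ)]
      rw [he]
      exact h
    have h := hT n _ hA
    have he : (Matrix.of fun p q : Fin n × Fin m =>
        T (Matrix.of fun i j => (Matrix.of fun p' q' : Fin n × Fin n =>
          (if p'.1 = p'.2 then (1:ℂ) else 0) * (if q'.1 = q'.2 then (1:ℂ) else 0))
            (p.1, i) (q.1, j)) p.2 q.2) = choiMatrix T := by
      ext p q
      have hX : (Matrix.of fun i j : Fin n =>
          (if p.1 = i then (1:ℂ) else 0) * (if q.1 = j then (1:ℂ) else 0)) =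
          Matrix.single p.1 q.1 (1:ℂ) := by
        ext i j
        by_cases h1 : p.1 = i
        · subst h1
          by_cases h2 : q.1 = j
          · subst h2; simp [Matrix.single]
          · simp [Matrix.single, h2, Ne.symm h2]
        · simp [Matrix.single, h1, Ne.symm h1]
      simp only [Matrix.of_apply, choiMatrix]
      rw [hX]
    rw [← he]
    exact h
  · intro hH k A hA
    obtain ⟨B, hB⟩ : ∃ B, choiMatrix T = Bᴴ * B := by
      open scoped MatrixOrder in exact CStarAlgebra.nonneg_iff_eq_star_mul_self.mp hH.nonneg
    obtain ⟨C, hC⟩ : ∃ C, A = Cᴴ * C := by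
      open scoped MatrixOrder in exact CStarAlgebra.nonneg_iff_eq_star_mul_self.mp hA.nonneg
    set D : Matrix ((Fin n × Fin m) × (Fin k × Fin n)) (Fin k × Fin m) ℂ :=
      Matrix.of fun tu q => ∑ j, C tu.2 (q.1, j) * B tu.1 (j, q.2) with hD
    have key : (Matrix.of fun p q : Fin k × Fin m =>
        T (Matrix.of fun i j => A (p.1, i) (q.1, j)) p.2 q.2) = Dᴴ * D := by
      ext p q
      show T (Matrix.of fun i j => A (p.1, i) (q.1, j)) p.2 q.2 = _
      rw [T_expand]
      have hHe : ∀ i j : Fin n, choiMatrix T (i, p.2) (j, q.2)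
          = ∑ t, star (B t (i, p.2)) * B t (j, q.2) := by
        intro i j
        rw [hB]
        simp [Matrix.mul_apply, Matrix.conjTranspose_apply]
      have hAe : ∀ i j : Fin n, A (p.1, i) (q.1, j)
          = ∑ u, star (C u (p.1, i)) * C u (q.1, j) := by
        intro i j
        rw [hC]
        simp [Matrix.mul_apply, Matrix.conjTranspose_apply]
      simp only [Matrix.of_apply, hHe, hAe]
      conv_rhs => rw [Matrix.mul_apply]
      simp only [Matrix.conjTranspose_apply, hD, Matrix.of_apply]
      rw [Fintype.sum_prod_type]
      simp only [star_sum, star_mul']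
      simp only [Finset.sum_mul_sum]
      conv_rhs => rw [sum_swap4]
      refine Finset.sum_congr rfl fun i _ => Finset.sum_congr rfl fun j _ => ?_
      rw [Finset.sum_comm]
      refine Finset.sum_congr rfl fun u _ => Finset.sum_congr rfl fun t _ => ?_
      ring
    rw [key]
    exact Matrix.posSemidef_conjTranspose_mul_self D
end
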